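/- arXiv:1710.09095 — 2 statements merged into one kernel-verified Lean document; each statement's English description precedes it below -/
import Mathlib

section
/- Let L be a positive integer and define D_L(z) = (2L+1)^{−1} ∑_{n=0}^{L} C(2L+1, 2n) z^{n−L} for z ∈ ℂ \ {0}. Then for every ω ∈ ℝ, D_L(e^{iω}) = (2(2L+1))^{−1} e^{−iω(2L−1)/4} [ (2 cos(ω/4))^{2L+1} + (−2i sin(ω/4))^{2L+1} ]. -/
open Complex

lemma pair_sum (m : ℕ) (g : ℕ → ℂ) :
    ∑ k ∈ Finset.range (2 * m), g k = ∑ n ∈ Finset.range m, (g (2 * n) + g (2 * n + 1)) := by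
  induction m with
  | zero => simp
  | succ m ih =>
    have : 2 * (m + 1) = (2 * m + 1) + 1 := by ring
    rw [this, Finset.sum_range_succ, Finset.sum_range_succ, ih, Finset.sum_range_succ]
    ring

lemma even_sum (m : ℕ) (t : ℂ) :
    (1 + t) ^ (2 * m + 1) + (1 - t) ^ (2 * m + 1)
      = 2 * ∑ n ∈ Finset.range (m + 1), (Nat.choose (2 * m + 1) (2 * n) : ℂ) * t ^ (2 * n) := by
  have h1 : (1 + t) ^ (2 * m + 1) = ∑ k ∈ Finset.range (2 * m + 2), (Nat.choose (2*m+1) k : ℂ) * t ^ k := by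
    rw [add_comm, add_pow]
    exact Finset.sum_congr rfl fun k _ => by ring
  have h2 : (1 - t) ^ (2 * m + 1) = ∑ k ∈ Finset.range (2 * m + 2), (Nat.choose (2*m+1) k : ℂ) * (-t) ^ k := by
    rw [sub_eq_add_neg, add_comm, add_pow]
    exact Finset.sum_congr rfl fun k _ => by ring
  rw [h1, h2, ← Finset.sum_add_distrib]
  have : (2 * m + 2) = 2 * (m + 1) := by ring
  rw [this, pair_sum, Finset.mul_sum]
  refine Finset.sum_congr rfl fun n _ => ?_
  rw [show (-t) ^ (2*n) = t ^ (2*n) by rw [neg_pow]; simp [pow_mul],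
      show (-t) ^ (2*n+1) = -(t ^ (2*n+1)) by rw [neg_pow]; simp [pow_mul, pow_succ]]
  ring


/-- The Thiran common factor `D_L` (closed binomial form). -/
noncomputable def DL (L : ℕ) (z : ℂ) : ℂ :=
  (1 / (2 * (L : ℂ) + 1)) *
    ∑ n ∈ Finset.range (L + 1), (Nat.choose (2 * L + 1) (2 * n) : ℂ) * z ^ ((n : ℤ) - (L : ℤ))

/-- Value of `D_L` on the unit circle. -/
theorem DL_on_circle (L : ℕ) (hL : 0 < L) (ω : ℝ) :
    DL L (Complex.exp (Complex.I * (ω : ℂ))) =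
      (1 / (2 * (2 * (L : ℂ) + 1))) *
        Complex.exp (-(Complex.I * (ω : ℂ) * (2 * (L : ℂ) - 1) / 4)) *
        ((2 * (Real.cos (ω / 4) : ℂ)) ^ (2 * L + 1) +
          (-(2 * Complex.I * (Real.sin (ω / 4) : ℂ))) ^ (2 * L + 1)) := by
  set b : ℂ := Complex.I * (ω : ℂ) / 4 with hb
  set t : ℂ := Complex.exp (2 * b) with ht
  have hcos : (2 * (Real.cos (ω / 4) : ℂ)) = Complex.exp b + Complex.exp (-b) := by
    rw [Complex.ofReal_cos, Complex.cos]
    have h1 : ((ω / 4 : ℝ) : ℂ) * Complex.I = b := by push_cast [hb]; ring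
    have h2 : -((ω / 4 : ℝ) : ℂ) * Complex.I = -b := by push_cast [hb]; ring
    rw [h1, h2]; ring
  have hsin : (-(2 * Complex.I * (Real.sin (ω / 4) : ℂ))) = Complex.exp (-b) - Complex.exp b := by
    rw [Complex.ofReal_sin, Complex.sin]
    have h1 : ((ω / 4 : ℝ) : ℂ) * Complex.I = b := by push_cast [hb]; ring
    have h2 : -((ω / 4 : ℝ) : ℂ) * Complex.I = -b := by push_cast [hb]; ring
    rw [h1, h2]
    have : Complex.I * Complex.I = -1 := Complex.I_mul_I
    field_simp
    ring_nf
    rw [Complex.I_sq]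
    ring
  have h1t : 1 + t = Complex.exp b * (Complex.exp b + Complex.exp (-b)) := by
    rw [ht, mul_add, ← Complex.exp_add, ← Complex.exp_add,
      show b + -b = 0 by ring, Complex.exp_zero, show b + b = 2 * b by ring]
    ring
  have h2t : 1 - t = Complex.exp b * (Complex.exp (-b) - Complex.exp b) := by
    rw [ht, mul_sub, ← Complex.exp_add, ← Complex.exp_add,
      show b + -b = 0 by ring, Complex.exp_zero, show b + b = 2 * b by ring]
  have hterm : ∀ n : ℕ, Complex.exp (Complex.I * (ω : ℂ)) ^ ((n : ℤ) - (L : ℤ))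
      = t ^ (2 * n) * Complex.exp (-(L : ℂ) * (Complex.I * (ω : ℂ))) := by
    intro n
    rw [ht, ← Complex.exp_int_mul, ← Complex.exp_nat_mul, ← Complex.exp_add]
    congr 1
    push_cast [hb]
    ring
  have hsum : ∑ n ∈ Finset.range (L + 1), (Nat.choose (2 * L + 1) (2 * n) : ℂ) *
        Complex.exp (Complex.I * (ω : ℂ)) ^ ((n : ℤ) - (L : ℤ))
      = (((1 + t) ^ (2 * L + 1) + (1 - t) ^ (2 * L + 1)) / 2) *
        Complex.exp (-(L : ℂ) * (Complex.I * (ω : ℂ))) := by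
    have h := even_sum L t
    calc ∑ n ∈ Finset.range (L + 1), (Nat.choose (2 * L + 1) (2 * n) : ℂ) *
          Complex.exp (Complex.I * (ω : ℂ)) ^ ((n : ℤ) - (L : ℤ))
        = (∑ n ∈ Finset.range (L + 1), (Nat.choose (2 * L + 1) (2 * n) : ℂ) * t ^ (2 * n)) *
          Complex.exp (-(L : ℂ) * (Complex.I * (ω : ℂ))) := by
          rw [Finset.sum_mul]
          exact Finset.sum_congr rfl fun n _ => by rw [hterm n]; ring
      _ = _ := by rw [show (∑ n ∈ Finset.range (L + 1), (Nat.choose (2 * L + 1) (2 * n) : ℂ) * t ^ (2 * n)) = ((1 + t) ^ (2 * L + 1) + (1 - t) ^ (2 * L + 1)) / 2 by linear_combination -h / 2]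
  have hexp : Complex.exp b ^ (2 * L + 1) * Complex.exp (-(L : ℂ) * (Complex.I * (ω : ℂ)))
      = Complex.exp (-(Complex.I * (ω : ℂ) * (2 * (L : ℂ) - 1) / 4)) := by
    rw [← Complex.exp_nat_mul, ← Complex.exp_add]
    congr 1
    push_cast [hb]
    ring
  rw [DL, hsum, h1t, h2t, mul_pow, mul_pow, hcos, hsin, ← hexp,
    show (1 : ℂ) / (2 * (2 * (L : ℂ) + 1)) = (1 / (2 * (L : ℂ) + 1)) / 2 by
      rw [div_div]; ring_nf]
  ring
end

section
/- Let L be a positive integer, let F(z) = ∑_{n=0}^{N} f(n) z^{−n} with real coefficients f(0), …, f(N) and F(1) = √2 (2L+1) 2^{−2L}, and set H_0(z) = F(z) D_L(z) and G_0(z) = F(z) D_L(1/z) z^{−L} for z ∈ ℂ \ {0}. Assume that for every ω ∈ ℝ the infinite product φ̂_H(ω) = ∏_{j=1}^{∞} 2^{−1/2} H_0(e^{i 2^{−j} ω}) converges (is multipliable), and define φ̂_G(ω) = ∏_{j=1}^{∞} 2^{−1/2} G_0(e^{i 2^{−j} ω}) analogously. Then for every ω ∈ ℝ, φ̂_G(ω)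 = e^{i β_L(ω)} · φ̂_H(ω) · e^{−iω/2}. -/
open Complex
open scoped Classical

/-- The phase function `α_L`, with the convention `arctan(±∞) = ±π/2` at the
points `ω ∈ 2π + 4πℤ`. -/
noncomputable def alphaL (L : ℕ) (ω : ℝ) : ℝ :=
  if ∃ k : ℤ, ω = 2 * Real.pi + 4 * Real.pi * k then (-1 : ℝ) ^ L * Real.pi
  else 2 * (-1 : ℝ) ^ L * Real.arctan (Real.tan (ω / 4) ^ (2 * L + 1))

/-- The phase function `β_L(ω) = ∑_{j=1}^∞ α_L(2^{-j} ω)`. -/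
noncomputable def betaL (L : ℕ) (ω : ℝ) : ℝ :=
  ∑' j : ℕ, alphaL L (ω / 2 ^ (j + 1))

lemma even_binom_sum (m : ℕ) (y : ℂ) :
    ∑ n ∈ Finset.range (m + 1), (Nat.choose (2 * m + 1) (2 * n) : ℂ) * y ^ (2 * n)
      = ((1 + y) ^ (2 * m + 1) + (1 - y) ^ (2 * m + 1)) / 2 := by
  set g : ℕ → ℂ := fun k => (y ^ k + (-y) ^ k) * (Nat.choose (2 * m + 1) k : ℂ) with hg
  have h1 : (1 + y) ^ (2 * m + 1)
      = ∑ k ∈ Finset.range (2 * m + 2), y ^ k * (Nat.choose (2 * m + 1) k : ℂ) := by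
    rw [add_comm, add_pow]
    simp
  have h2 : (1 - y) ^ (2 * m + 1)
      = ∑ k ∈ Finset.range (2 * m + 2), (-y) ^ k * (Nat.choose (2 * m + 1) k : ℂ) := by
    rw [sub_eq_add_neg, add_comm, add_pow]
    simp
  have hsum : (1 + y) ^ (2 * m + 1) + (1 - y) ^ (2 * m + 1)
      = ∑ k ∈ Finset.range (2 * m + 2), g k := by
    rw [h1, h2, ← Finset.sum_add_distrib]
    simp [hg, add_mul]
  have hinj : ∀ a ∈ Finset.range (m+1), ∀ b ∈ Finset.range (m+1),
      2 * a = 2 * b → a = b := by intro a _ b _ h; omega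
  have himg : ∑ k ∈ (Finset.range (m + 1)).image (fun n => 2 * n), g k
      = ∑ n ∈ Finset.range (m + 1), g (2 * n) := Finset.sum_image hinj
  have hsubset : (Finset.range (m + 1)).image (fun n => 2 * n) ⊆ Finset.range (2 * m + 2) := by
    intro k hk
    simp only [Finset.mem_image, Finset.mem_range] at hk ⊢
    obtain ⟨n, hn, rfl⟩ := hk; omega
  have hzero : ∀ k ∈ Finset.range (2 * m + 2),
      k ∉ (Finset.range (m + 1)).image (fun n => 2 * n) → g k = 0 := by
    intro k hk hk'
    simp only [Finset.mem_range, Finset.mem_image, not_exists] at hk hk'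
    have hodd : Odd k := by
      rcases Nat.even_or_odd k with ⟨r, hr⟩ | h
      · exfalso; have := hk' r; omega
      · exact h
    simp [hg, hodd.neg_pow]
  have := Finset.sum_subset hsubset hzero
  rw [hsum, ← this, himg]
  have hterm : ∀ n ∈ Finset.range (m+1),
      g (2*n) = 2 * ((Nat.choose (2*m+1) (2*n) : ℂ) * y ^ (2*n)) := by
    intro n _
    have he : (-y) ^ (2 * n) = y ^ (2 * n) := Even.neg_pow ⟨n, by ring⟩ y
    simp only [hg, he]; ring
  rw [Finset.sum_congr rfl hterm, ← Finset.mul_sum]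
  ring

lemma DL_exp (L : ℕ) (v : ℝ) :
    DL L (Complex.exp (Complex.I * (v : ℂ)))
      = (2 ^ (2 * L) / (2 * (L : ℂ) + 1)) *
        Complex.exp (Complex.I * (v : ℂ) * (1 - 2 * (L : ℂ)) / 4) *
        (((Real.cos (v / 4) : ℝ) : ℂ) ^ (2 * L + 1)
          - Complex.I * (-1) ^ L * ((Real.sin (v / 4) : ℝ) : ℂ) ^ (2 * L + 1)) := by
  set θ : ℂ := ((v / 4 : ℝ) : ℂ) with hθ
  have hθv : (θ : ℂ) = (v : ℂ) / 4 := by rw [hθ]; push_cast; ring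
  set y : ℂ := Complex.exp (2 * θ * Complex.I) with hy
  set e : ℂ := Complex.exp (θ * Complex.I) with he
  have eA : Complex.exp (-θ * Complex.I) * e = 1 := by
    rw [he, ← Complex.exp_add, neg_mul, neg_add_cancel, Complex.exp_zero]
  have eB : e * e = y := by rw [he, hy, ← Complex.exp_add]; congr 1; ring
  have hzpow : ∀ n ∈ Finset.range (L + 1),
      (Nat.choose (2 * L + 1) (2 * n) : ℂ) *
          (Complex.exp (Complex.I * (v : ℂ))) ^ ((n : ℤ) - (L : ℤ))
      = Complex.exp (-(L : ℂ) * (Complex.I * (v : ℂ))) *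
          ((Nat.choose (2 * L + 1) (2 * n) : ℂ) * y ^ (2 * n)) := by
    intro n _
    have : (Complex.exp (Complex.I * (v : ℂ))) ^ ((n : ℤ) - (L : ℤ))
        = Complex.exp (-(L : ℂ) * (Complex.I * (v : ℂ))) * y ^ (2 * n) := by
      rw [← Complex.exp_int_mul, hy, ← Complex.exp_nat_mul, ← Complex.exp_add]
      congr 1
      rw [hθv]; push_cast; ring
    rw [this]; ring
  have hsum : ∑ n ∈ Finset.range (L + 1),
      (Nat.choose (2 * L + 1) (2 * n) : ℂ) *
        (Complex.exp (Complex.I * (v : ℂ))) ^ ((n : ℤ) - (L : ℤ))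
      = Complex.exp (-(L : ℂ) * (Complex.I * (v : ℂ))) *
          (((1 + y) ^ (2 * L + 1) + (1 - y) ^ (2 * L + 1)) / 2) := by
    rw [Finset.sum_congr rfl hzpow, ← Finset.mul_sum, even_binom_sum]
  have h1y : 1 + y = 2 * Complex.cos θ * e := by
    linear_combination (-e) * Complex.two_cos θ - eA - eB
  have h2y : 1 - y = (-2) * Complex.I * Complex.sin θ * e := by
    linear_combination (Complex.I * e) * Complex.two_sin θ +
      (Complex.exp (-θ * Complex.I) * e - e ^ 2) * Complex.I_sq - eA + eB
  have hA : (2 * Complex.cos θ * e) ^ (2 * L + 1)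
      = 2 ^ (2 * L + 1) * Complex.cos θ ^ (2 * L + 1) * e ^ (2 * L + 1) := by
    rw [mul_pow, mul_pow]
  have hB : ((-2) * Complex.I * Complex.sin θ * e) ^ (2 * L + 1)
      = ((-2) * Complex.I) ^ (2 * L + 1) * Complex.sin θ ^ (2 * L + 1) * e ^ (2 * L + 1) := by
    rw [mul_pow, mul_pow]
  have hK : ((-2) * Complex.I) ^ (2 * L + 1)
      = -(2 ^ (2 * L + 1)) * (-1) ^ L * Complex.I := by
    have h4 : ((-2) * Complex.I) ^ 2 = -4 := by
      have := Complex.I_mul_I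
      linear_combination 4 * this
    rw [pow_succ, pow_mul, h4]
    have : ((-4 : ℂ)) ^ L = 4 ^ L * (-1) ^ L := by
      rw [← neg_one_mul, mul_pow]; ring
    rw [this]
    have : ((4 : ℂ)) ^ L = 2 ^ (2 * L) := by rw [pow_mul]; norm_num
    rw [this]; ring
  have hE : e ^ (2 * L + 1) = Complex.exp ((2 * (L : ℂ) + 1) * (θ * Complex.I)) := by
    rw [he, ← Complex.exp_nat_mul]; congr 1; push_cast; ring
  have hcomb : Complex.exp (-(L : ℂ) * (Complex.I * (v : ℂ))) *
      Complex.exp ((2 * (L : ℂ) + 1) * (θ * Complex.I))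
      = Complex.exp (Complex.I * (v : ℂ) * (1 - 2 * (L : ℂ)) / 4) := by
    rw [← Complex.exp_add]; congr 1; rw [hθv]; ring
  have hcos : Complex.cos θ = ((Real.cos (v / 4) : ℝ) : ℂ) := (Complex.ofReal_cos _).symm
  have hsin : Complex.sin θ = ((Real.sin (v / 4) : ℝ) : ℂ) := (Complex.ofReal_sin _).symm
  rw [DL, hsum, h1y, h2y, hA, hB, hK, hE, hcos, hsin, ← hcomb]
  ring

lemma exceptional_iff (v : ℝ) :
    (∃ k : ℤ, v = 2 * Real.pi + 4 * Real.pi * k) ↔ Real.cos (v / 4) = 0 := by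
  rw [Real.cos_eq_zero_iff]
  constructor
  · rintro ⟨k, rfl⟩; exact ⟨k, by ring⟩
  · rintro ⟨k, hk⟩; exact ⟨k, by linarith⟩

lemma phase_eq (L : ℕ) (v : ℝ) :
    ((Real.cos (v / 4) : ℝ) : ℂ) ^ (2 * L + 1)
        + Complex.I * (-1) ^ L * ((Real.sin (v / 4) : ℝ) : ℂ) ^ (2 * L + 1)
      = Complex.exp (Complex.I * ((alphaL L v : ℝ) : ℂ)) *
        (((Real.cos (v / 4) : ℝ) : ℂ) ^ (2 * L + 1)
          - Complex.I * (-1) ^ L * ((Real.sin (v / 4) : ℝ) : ℂ) ^ (2 * L + 1)) := by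
  have hexp : Complex.exp (Complex.I * ((alphaL L v : ℝ) : ℂ))
      = ((Real.cos (alphaL L v) : ℝ) : ℂ) + ((Real.sin (alphaL L v) : ℝ) : ℂ) * Complex.I := by
    rw [mul_comm, Complex.exp_mul_I, Complex.ofReal_cos, Complex.ofReal_sin]
  by_cases hc : Real.cos (v / 4) = 0
  · have hcond : ∃ k : ℤ, v = 2 * Real.pi + 4 * Real.pi * k := (exceptional_iff v).2 hc
    have hα : alphaL L v = (-1 : ℝ) ^ L * Real.pi := by rw [alphaL, if_pos hcond]
    have hval : Complex.exp (Complex.I * ((alphaL L v : ℝ) : ℂ)) = -1 := by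
      rw [hexp, hα]
      rcases Nat.even_or_odd L with hE | hO
      · rw [hE.neg_one_pow]; simp
      · rw [hO.neg_one_pow]; simp
    rw [hval, hc]
    push_cast
    rw [zero_pow (by omega : 2 * L + 1 ≠ 0)]
    ring
  · have hcond : ¬ ∃ k : ℤ, v = 2 * Real.pi + 4 * Real.pi * k :=
      fun h => hc ((exceptional_iff v).1 h)
    set x : ℝ := Real.tan (v / 4) ^ (2 * L + 1) with hxdef
    have hα : alphaL L v = 2 * (-1 : ℝ) ^ L * Real.arctan x := by rw [alphaL, if_neg hcond]
    have hd : (0 : ℝ) < 1 + x ^ 2 := by positivity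
    have hsq : Real.sqrt (1 + x ^ 2) ^ 2 = 1 + x ^ 2 := Real.sq_sqrt hd.le
    have hsqpos : (0:ℝ) < Real.sqrt (1 + x ^ 2) := Real.sqrt_pos.2 hd
    have hcos2 : Real.cos (2 * Real.arctan x) = (1 - x ^ 2) / (1 + x ^ 2) := by
      rw [Real.cos_two_mul, Real.cos_arctan]
      rw [div_pow, one_pow, hsq]
      field_simp
      ring
    have hsin2 : Real.sin (2 * Real.arctan x) = 2 * x / (1 + x ^ 2) := by
      rw [Real.sin_two_mul, Real.sin_arctan, Real.cos_arctan, ← hsq]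
      field_simp
      rw [Real.sqrt_sq hsqpos.le]
    have hcα : Real.cos (alphaL L v) = (1 - x ^ 2) / (1 + x ^ 2) := by
      rw [hα]
      rcases Nat.even_or_odd L with hE | hO
      · rw [hE.neg_one_pow]
        rw [show (2:ℝ) * 1 * Real.arctan x = 2 * Real.arctan x by ring, hcos2]
      · rw [hO.neg_one_pow]
        rw [show (2:ℝ) * (-1) * Real.arctan x = -(2 * Real.arctan x) by ring, Real.cos_neg, hcos2]
    have hsα : Real.sin (alphaL L v) = (-1 : ℝ) ^ L * (2 * x / (1 + x ^ 2)) := by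
      rw [hα]
      rcases Nat.even_or_odd L with hE | hO
      · rw [hE.neg_one_pow]
        rw [show (2:ℝ) * 1 * Real.arctan x = 2 * Real.arctan x by ring, hsin2]; ring
      · rw [hO.neg_one_pow]
        rw [show (2:ℝ) * (-1) * Real.arctan x = -(2 * Real.arctan x) by ring, Real.sin_neg, hsin2]
        ring
    have hxc : ((x : ℝ) : ℂ) * ((Real.cos (v / 4) : ℝ) : ℂ) ^ (2 * L + 1)
        = ((Real.sin (v / 4) : ℝ) : ℂ) ^ (2 * L + 1) := by
      have h0 : x * Real.cos (v / 4) ^ (2 * L + 1) = Real.sin (v / 4) ^ (2 * L + 1) := by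
        rw [hxdef, Real.tan_eq_sin_div_cos, div_pow, div_mul_cancel₀]
        exact pow_ne_zero _ hc
      exact_mod_cast congrArg (fun r : ℝ => (r : ℂ)) h0
    have hε2 : ((-1 : ℂ) ^ L) ^ 2 = 1 := by
      rw [← pow_mul, mul_comm L 2, pow_mul]; norm_num
    have hdC : (1 : ℂ) + ((x : ℝ) : ℂ) ^ 2 ≠ 0 := by
      have : ((1 + x ^ 2 : ℝ) : ℂ) ≠ 0 := by exact_mod_cast hd.ne'
      push_cast at this; exact this
    rw [hexp, hcα, hsα]
    push_cast at hxc ⊢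
    field_simp
    linear_combination (2 * ((x : ℝ) : ℂ) - 2 * Complex.I * (-1 : ℂ) ^ L) * hxc
      - 2 * ((x : ℝ) : ℂ) * (Complex.sin ((v : ℂ) / 4)) ^ (2 * L + 1) * hε2
      + (2 * ((x : ℝ) : ℂ) * Complex.sin ((v : ℂ) / 4) * Complex.sin ((v : ℂ) / 4) ^ (L * 2)
          * (-1 : ℂ) ^ (L * 2)) * Complex.I_sq

lemma D_ratio (L : ℕ) (v : ℝ) :
    DL L (1 / Complex.exp (Complex.I * (v : ℂ))) *
        (Complex.exp (Complex.I * (v : ℂ))) ^ (-(L : ℤ))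
      = Complex.exp (Complex.I * ((alphaL L v : ℝ) : ℂ)) *
          Complex.exp (-(Complex.I * (v : ℂ)) / 2) * DL L (Complex.exp (Complex.I * (v : ℂ))) := by
  have h1 : 1 / Complex.exp (Complex.I * (v : ℂ)) = Complex.exp (Complex.I * ((-v : ℝ) : ℂ)) := by
    rw [one_div, ← Complex.exp_neg]
    congr 1; push_cast; ring
  have hzpow : (Complex.exp (Complex.I * (v : ℂ))) ^ (-(L : ℤ))
      = Complex.exp (((-(L : ℤ) : ℤ) : ℂ) * (Complex.I * (v : ℂ))) := by
    rw [Complex.exp_int_mul]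
  rw [h1, hzpow, DL_exp L (-v), DL_exp L v]
  have hn4 : (-v) / 4 = -(v / 4) := by ring
  rw [hn4, Real.cos_neg, Real.sin_neg]
  have hodd : Odd (2 * L + 1) := ⟨L, by ring⟩
  have hnegpow : (((-Real.sin (v / 4) : ℝ) : ℂ)) ^ (2 * L + 1)
      = -(((Real.sin (v / 4) : ℝ) : ℂ)) ^ (2 * L + 1) := by
    push_cast
    exact hodd.neg_pow _
  rw [hnegpow]
  have hE : Complex.exp (Complex.I * ((-v : ℝ) : ℂ) * (1 - 2 * (L : ℂ)) / 4) *
      Complex.exp (((-(L : ℤ) : ℤ) : ℂ) * (Complex.I * (v : ℂ)))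
      = Complex.exp (-(Complex.I * (v : ℂ)) / 2) *
          Complex.exp (Complex.I * (v : ℂ) * (1 - 2 * (L : ℂ)) / 4) := by
    rw [← Complex.exp_add, ← Complex.exp_add]
    congr 1; push_cast; ring
  have hP := phase_eq L v
  linear_combination
    ((2 : ℂ) ^ (2 * L) / (2 * (L : ℂ) + 1)) *
        Complex.exp (Complex.I * ((-v : ℝ) : ℂ) * (1 - 2 * (L : ℂ)) / 4) *
        Complex.exp (((-(L : ℤ) : ℤ) : ℂ) * (Complex.I * (v : ℂ))) * hP +
    ((2 : ℂ) ^ (2 * L) / (2 * (L : ℂ) + 1)) *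
        (Complex.exp (Complex.I * ((alphaL L v : ℝ) : ℂ)) *
          (((Real.cos (v / 4) : ℝ) : ℂ) ^ (2 * L + 1)
            - Complex.I * (-1) ^ L * ((Real.sin (v / 4) : ℝ) : ℂ) ^ (2 * L + 1))) * hE


lemma abs_arctan_le_abs (y : ℝ) : |Real.arctan y| ≤ |y| := by
  have base : ∀ z : ℝ, 0 ≤ z → Real.arctan z ≤ z := by
    intro z hz
    have h0 : 0 ≤ Real.arctan z := by
      rw [← Real.arctan_zero]
      exact Real.arctan_strictMono.monotone hz
    have h := Real.le_tan h0 (Real.arctan_lt_pi_div_two z)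
    rwa [Real.tan_arctan] at h
  rcases le_or_gt 0 y with h | h
  · have h0 : 0 ≤ Real.arctan y := by
      rw [← Real.arctan_zero]; exact Real.arctan_strictMono.monotone h
    rw [_root_.abs_of_nonneg h0, _root_.abs_of_nonneg h]
    exact base y h
  · have h0 : Real.arctan y ≤ 0 := by
      rw [← Real.arctan_zero]; exact Real.arctan_strictMono.monotone h.le
    rw [abs_of_nonpos h0, _root_.abs_of_neg h, ← Real.arctan_neg]
    exact base (-y) (by linarith)

lemma abs_alphaL_le (L : ℕ) (u : ℝ) (hu : |u| ≤ 1) : |alphaL L u| ≤ |u| := by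
  have hπ := Real.pi_gt_three
  have hne : ¬ ∃ k : ℤ, u = 2 * Real.pi + 4 * Real.pi * k := by
    rintro ⟨k, rfl⟩
    rcases abs_le.1 hu with ⟨hl, hr⟩
    rcases le_or_gt 0 (k : ℝ) with hk | hk
    · nlinarith
    · have hk0 : k < 0 := by exact_mod_cast hk
      have hk1 : (k : ℝ) ≤ -1 := by
        have h1 : k ≤ -1 := by omega
        calc (k : ℝ) ≤ ((-1 : ℤ) : ℝ) := by exact_mod_cast h1
          _ = -1 := by norm_num
      nlinarith
  rw [alphaL, if_neg hne]
  have habs : |2 * (-1 : ℝ) ^ L * Real.arctan (Real.tan (u / 4) ^ (2 * L + 1))|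
      = 2 * |Real.arctan (Real.tan (u / 4) ^ (2 * L + 1))| := by
    rw [abs_mul, abs_mul, _root_.abs_pow, abs_neg, abs_one, one_pow]
    norm_num
  rw [habs]
  have harctan := abs_arctan_le_abs (Real.tan (u / 4) ^ (2 * L + 1))
  have hcos : (1 : ℝ) / 2 ≤ Real.cos (u / 4) := by
    have h := Real.one_sub_sq_div_two_le_cos (x := u / 4)
    nlinarith [abs_le.1 hu, sq_nonneg u, _root_.sq_abs u]
  have hsin : |Real.sin (u / 4)| ≤ |u| / 4 := by
    have := Real.abs_sin_le_abs (x := u / 4)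
    rwa [abs_div, abs_of_pos (by norm_num : (0:ℝ) < 4)] at this
  have htan : |Real.tan (u / 4)| ≤ |u| / 2 := by
    rw [Real.tan_eq_sin_div_cos, abs_div, abs_of_pos (by linarith : (0:ℝ) < Real.cos (u / 4))]
    calc |Real.sin (u / 4)| / Real.cos (u / 4) ≤ (|u| / 4) / (1 / 2) :=
          div_le_div₀ (by positivity) hsin (by norm_num) hcos
      _ = |u| / 2 := by ring
  have hpow : |Real.tan (u / 4) ^ (2 * L + 1)| ≤ |u| / 2 := by
    rw [_root_.abs_pow]
    calc |Real.tan (u / 4)| ^ (2 * L + 1) ≤ (|u| / 2) ^ (2 * L + 1) :=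
          pow_le_pow_left₀ (abs_nonneg _) htan _
      _ ≤ |u| / 2 := by
          apply pow_le_of_le_one (by positivity) (by linarith [(abs_le.1 hu).2]) (by omega)
  calc 2 * |Real.arctan (Real.tan (u / 4) ^ (2 * L + 1))|
      ≤ 2 * |Real.tan (u / 4) ^ (2 * L + 1)| := by linarith
    _ ≤ 2 * (|u| / 2) := by linarith
    _ = |u| := by ring

/-- Relation between the scaling functions `φ̂_G` and `φ̂_H` of a
common-factor filter pair. -/
theorem commonFactor_scaling_relation (L : ℕ) (hL : 0 < L) (N : ℕ) (f : ℕ → ℝ)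
    (F H0 G0 : ℂ → ℂ)
    (hF : ∀ z : ℂ, z ≠ 0 → F z = ∑ n ∈ Finset.range (N + 1), (f n : ℂ) * z ^ (-(n : ℤ)))
    (hF1 : F 1 = (Real.sqrt 2 : ℂ) * (2 * (L : ℂ) + 1) * 2 ^ (-(2 * (L : ℤ))))
    (hH0 : ∀ z : ℂ, z ≠ 0 → H0 z = F z * DL L z)
    (hG0 : ∀ z : ℂ, z ≠ 0 → G0 z = F z * DL L (1 / z) * z ^ (-(L : ℤ)))
    (phiH phiG : ℝ → ℂ)
    (hMulH : ∀ ω : ℝ, Multipliable fun j : ℕ =>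
      (1 / (Real.sqrt 2 : ℂ)) * H0 (Complex.exp (Complex.I * ((ω / 2 ^ (j + 1) : ℝ) : ℂ))))
    (hMulG : ∀ ω : ℝ, Multipliable fun j : ℕ =>
      (1 / (Real.sqrt 2 : ℂ)) * G0 (Complex.exp (Complex.I * ((ω / 2 ^ (j + 1) : ℝ) : ℂ))))
    (hphiH : ∀ ω : ℝ, phiH ω = ∏' j : ℕ,
      (1 / (Real.sqrt 2 : ℂ)) * H0 (Complex.exp (Complex.I * ((ω / 2 ^ (j + 1) : ℝ) : ℂ))))
    (hphiG : ∀ ω : ℝ, phiG ω = ∏' j : ℕ,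
      (1 / (Real.sqrt 2 : ℂ)) * G0 (Complex.exp (Complex.I * ((ω / 2 ^ (j + 1) : ℝ) : ℂ)))) :
    ∀ ω : ℝ, phiG ω =
      Complex.exp (Complex.I * (betaL L ω : ℂ)) * phiH ω *
        Complex.exp (-(Complex.I * (ω : ℂ)) / 2) := by
  intro ω
  set c : ℕ → ℂ := fun j =>
    Complex.I * ((alphaL L (ω / 2 ^ (j + 1)) : ℝ) : ℂ)
      + -(Complex.I * ((ω / 2 ^ (j + 1) : ℝ) : ℂ)) / 2 with hc
  have hterm : ∀ j : ℕ,
      (1 / (Real.sqrt 2 : ℂ)) * G0 (Complex.exp (Complex.I * ((ω / 2 ^ (j + 1) : ℝ) : ℂ)))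
        = Complex.exp (c j) *
          ((1 / (Real.sqrt 2 : ℂ)) * H0 (Complex.exp (Complex.I * ((ω / 2 ^ (j + 1) : ℝ) : ℂ)))) := by
    intro j
    have hz : Complex.exp (Complex.I * ((ω / 2 ^ (j + 1) : ℝ) : ℂ)) ≠ 0 := Complex.exp_ne_zero _
    rw [hG0 _ hz, hH0 _ hz, hc]
    simp only []
    rw [Complex.exp_add]
    have hD := D_ratio L (ω / 2 ^ (j + 1))
    linear_combination (1 / (Real.sqrt 2 : ℂ)) *
      F (Complex.exp (Complex.I * ((ω / 2 ^ (j + 1) : ℝ) : ℂ))) * hD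
  have hsumv : Summable (fun j : ℕ => ω / 2 ^ (j + 1)) := by
    have hfe : (fun j : ℕ => ω / 2 ^ (j + 1)) = fun j : ℕ => (ω / 2) * (1 / 2 : ℝ) ^ j := by
      funext j
      rw [div_pow, one_pow, pow_succ]
      ring
    rw [hfe]
    exact summable_geometric_two.mul_left _
  have hsumα : Summable (fun j : ℕ => alphaL L (ω / 2 ^ (j + 1))) := by
    obtain ⟨J, hJ⟩ := pow_unbounded_of_one_lt |ω| (by norm_num : (1:ℝ) < 2)
    rw [← summable_nat_add_iff J]
    apply Summable.of_norm_bounded (g := fun j : ℕ => |ω| / 2 ^ (j + J + 1))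
    · have hfe : (fun j : ℕ => |ω| / 2 ^ (j + J + 1))
          = fun j : ℕ => (|ω| / 2 ^ (J + 1)) * (1 / 2 : ℝ) ^ j := by
        funext j
        rw [div_pow, one_pow, pow_add, pow_add]
        ring
      rw [hfe]
      exact summable_geometric_two.mul_left _
    · intro j
      have hpow2 : (2 : ℝ) ^ J ≤ 2 ^ (j + J + 1) :=
        pow_le_pow_right₀ one_le_two (by omega)
      have hvabs : |ω / 2 ^ (j + J + 1)| = |ω| / 2 ^ (j + J + 1) := by
        rw [abs_div, abs_of_pos (by positivity : (0:ℝ) < 2 ^ (j + J + 1))]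
      have hsmall : |ω / 2 ^ (j + J + 1)| ≤ 1 := by
        rw [hvabs, div_le_one (by positivity)]
        exact hJ.le.trans hpow2
      calc ‖alphaL L (ω / 2 ^ (j + J + 1))‖
          ≤ |ω / 2 ^ (j + J + 1)| := abs_alphaL_le L _ hsmall
        _ = |ω| / 2 ^ (j + J + 1) := hvabs
  have hceq : c = fun j : ℕ =>
      Complex.I * (((alphaL L (ω / 2 ^ (j + 1)) - (ω / 2 ^ (j + 1)) / 2 : ℝ)) : ℂ) := by
    funext j
    rw [hc]
    push_cast
    ring
  have hsumr : Summable (fun j : ℕ => alphaL L (ω / 2 ^ (j + 1)) - (ω / 2 ^ (j + 1)) / 2) :=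
    hsumα.sub (hsumv.div_const 2)
  have hsumc : Summable c := by
    rw [hceq]
    apply Summable.mul_left
    exact (Complex.summable_ofReal).2 hsumr
  have hprodq : HasProd (fun j : ℕ => Complex.exp (c j)) (Complex.exp (∑' j, c j)) :=
    hsumc.hasSum.cexp
  have hmulq : Multipliable (fun j : ℕ => Complex.exp (c j)) := ⟨_, hprodq⟩
  have htprodq : ∏' j : ℕ, Complex.exp (c j) = Complex.exp (∑' j, c j) := hprodq.tprod_eq
  have htsum2 : ∑' j : ℕ, (ω / 2 ^ (j + 1)) / 2 = ω / 2 := by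
    have hfe : (fun j : ℕ => (ω / 2 ^ (j + 1)) / 2) = fun j : ℕ => (ω / 4) * (1 / 2 : ℝ) ^ j := by
      funext j
      rw [div_pow, one_pow, pow_succ]
      ring
    rw [hfe, tsum_mul_left, tsum_geometric_two]
    ring
  have htsum : ∑' j : ℕ, c j = Complex.I * ((betaL L ω : ℝ) : ℂ) + -(Complex.I * (ω : ℂ)) / 2 := by
    have hsplit : ∑' j : ℕ, (alphaL L (ω / 2 ^ (j + 1)) - ω / 2 ^ (j + 1) / 2)
        = betaL L ω - ω / 2 := by
      rw [Summable.tsum_sub hsumα (hsumv.div_const 2), htsum2, betaL]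
    rw [hceq, tsum_mul_left, ← Complex.ofReal_tsum, hsplit]
    push_cast
    ring
  rw [hphiG ω, hphiH ω]
  calc (∏' j : ℕ, (1 / (Real.sqrt 2 : ℂ)) *
          G0 (Complex.exp (Complex.I * ((ω / 2 ^ (j + 1) : ℝ) : ℂ))))
      = ∏' j : ℕ, (Complex.exp (c j) *
          ((1 / (Real.sqrt 2 : ℂ)) *
            H0 (Complex.exp (Complex.I * ((ω / 2 ^ (j + 1) : ℝ) : ℂ))))) := tprod_congr hterm
    _ = (∏' j : ℕ, Complex.exp (c j)) *
          ∏' j : ℕ, (1 / (Real.sqrt 2 : ℂ)) *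
            H0 (Complex.exp (Complex.I * ((ω / 2 ^ (j + 1) : ℝ) : ℂ))) :=
        Multipliable.tprod_mul hmulq (hMulH ω)
    _ = Complex.exp (Complex.I * (betaL L ω : ℂ)) *
          (∏' j : ℕ, (1 / (Real.sqrt 2 : ℂ)) *
            H0 (Complex.exp (Complex.I * ((ω / 2 ^ (j + 1) : ℝ) : ℂ)))) *
          Complex.exp (-(Complex.I * (ω : ℂ)) / 2) := by
        rw [htprodq, htsum, Complex.exp_add]
        ring
end
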